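/- Let A and B be d×d positive definite real matrices with B ⪯ A (i.e., A − B is positive semidefinite). Then for every x ∈ ℝ^d: xᵀ A x ≤ (xᵀ B x) · det(A)/det(B). -/

import Mathlib

open Matrix

private lemma eig_ge_one {n : Type*} [Fintype n] [DecidableEq n] {C : Matrix n n ℝ}
    (hC : C.IsHermitian) (h1 : (C - 1).PosSemidef) (i : n) :
    1 ≤ hC.eigenvalues i := by
  set v : n → ℝ := ⇑(hC.eigenvectorBasis i) with hv
  have hmv : C *ᵥ v = hC.eigenvalues i • v := hC.mulVec_eigenvectorBasis i
  have hunit : star v ⬝ᵥ v = 1 := by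
    have hn : ‖hC.eigenvectorBasis i‖ = 1 := hC.eigenvectorBasis.orthonormal.1 i
    have := EuclideanSpace.inner_eq_star_dotProduct (hC.eigenvectorBasis i) (hC.eigenvectorBasis i)
    rw [real_inner_self_eq_norm_sq, hn] at this
    simpa [hv] using this.symm
  have h := h1.dotProduct_mulVec_nonneg v
  rw [sub_mulVec, one_mulVec, hmv, dotProduct_sub, dotProduct_smul, hunit] at h
  simpa using h

private lemma smul_sub_posSemidef {n : Type*} [Fintype n] [DecidableEq n] {C : Matrix n n ℝ}
    (hC : C.IsHermitian) (c : ℝ) (hc : ∀ i, hC.eigenvalues i ≤ c) :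
    (c • (1 : Matrix n n ℝ) - C).PosSemidef := by
  set U : Matrix n n ℝ := (hC.eigenvectorUnitary : Matrix n n ℝ) with hU
  have hUU : U * star U = 1 := by
    simp [hU]
  have hdiag : (diagonal (fun i => c - hC.eigenvalues i)).PosSemidef :=
    posSemidef_diagonal_iff.mpr fun i => sub_nonneg.mpr (hc i)
  have key : U * diagonal (fun i => c - hC.eigenvalues i) * star U
      = c • (1 : Matrix n n ℝ) - C := by
    have hspec := hC.spectral_theorem
    have : diagonal (fun i => c - hC.eigenvalues i)
        = c • (1 : Matrix n n ℝ) - diagonal (RCLike.ofReal ∘ hC.eigenvalues) := by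
      rw [← diagonal_sub]
      simp [smul_eq_diagonal_mul, ← diagonal_mul_diagonal, ← diagonal_one, diagonal_mul_diagonal]
    rw [Unitary.conjStarAlgAut_apply, ← hU] at hspec
    rw [this, Matrix.mul_sub, Matrix.sub_mul, ← hspec]
    congr 1
    simp only [Matrix.mul_smul, Matrix.smul_mul, Matrix.mul_one, hUU]
  have := hdiag.mul_mul_conjTranspose_same U
  rwa [show Uᴴ = star U from rfl, key] at this

private lemma key_lemma {n : Type*} [Fintype n] [DecidableEq n] {C : Matrix n n ℝ}
    (hC : C.IsHermitian) (h1 : (C - 1).PosSemidef) (y : n → ℝ) :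
    y ⬝ᵥ (C *ᵥ y) ≤ (y ⬝ᵥ y) * C.det := by
  have hdet : C.det = ∏ i, hC.eigenvalues i := by
    simpa using hC.det_eq_prod_eigenvalues
  have hle : ∀ i, hC.eigenvalues i ≤ C.det := by
    intro i
    rw [hdet, ← Finset.mul_prod_erase Finset.univ _ (Finset.mem_univ i)]
    have hone : (1 : ℝ) ≤ ∏ j ∈ Finset.univ.erase i, hC.eigenvalues j := by
      calc (1 : ℝ) = ∏ _j ∈ Finset.univ.erase i, (1 : ℝ) := by simp
        _ ≤ _ := Finset.prod_le_prod (fun _ _ => zero_le_one)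
              (fun j _ => eig_ge_one hC h1 j)
    exact le_mul_of_one_le_right (zero_le_one.trans (eig_ge_one hC h1 i)) hone
  have hpsd := (smul_sub_posSemidef hC C.det hle).dotProduct_mulVec_nonneg y
  have hy : star y = y := by simp
  rw [hy, sub_mulVec, smul_mulVec, one_mulVec, dotProduct_sub, dotProduct_smul] at hpsd
  simp only [smul_eq_mul] at hpsd
  nlinarith [hpsd]

theorem stmt_5 (d : ℕ) (A B : Matrix (Fin d) (Fin d) ℝ)
    (hA : A.PosDef) (hB : B.PosDef) (hBA : (A - B).PosSemidef) (x : Fin d → ℝ) :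
    x ⬝ᵥ (A *ᵥ x) ≤ (x ⬝ᵥ (B *ᵥ x)) * (A.det / B.det) := by
  classical
  set S : Matrix (Fin d) (Fin d) ℝ := (open scoped MatrixOrder in CFC.sqrt B) with hSdef
  have hSpsd : S.PosSemidef := by open scoped MatrixOrder in exact (CFC.sqrt_nonneg B).posSemidef
  have hSS : S * S = B := by open scoped MatrixOrder in exact CFC.sqrt_mul_sqrt_self B hB.posSemidef.nonneg
  have hSdet : S.det * S.det = B.det := by rw [← det_mul, hSS]
  have hSdet0 : S.det ≠ 0 := by
    intro h
    rw [h, zero_mul] at hSdet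
    exact hB.det_pos.ne hSdet
  have hSH : S.IsHermitian := hSpsd.1
  have hST : Sᵀ = S := by rw [← conjTranspose_eq_transpose_of_trivial, hSH.eq]
  have hSi : S * S⁻¹ = 1 := mul_nonsing_inv S hSdet0.isUnit
  have hSi' : S⁻¹ * S = 1 := nonsing_inv_mul S hSdet0.isUnit
  have hSiH : (S⁻¹).IsHermitian := hSH.inv
  set C : Matrix (Fin d) (Fin d) ℝ := S⁻¹ * A * S⁻¹ with hCdef
  have hCH : C.IsHermitian := by
    have := isHermitian_conjTranspose_mul_mul S⁻¹ hA.isHermitian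
    rwa [hSiH.eq] at this
  have hSBS : S⁻¹ * B * S⁻¹ = 1 := by
    rw [← hSS, ← Matrix.mul_assoc S⁻¹ S S, hSi', Matrix.one_mul, hSi]
  have hC1 : (C - 1).PosSemidef := by
    have h' : C - 1 = (S⁻¹)ᴴ * (A - B) * S⁻¹ := by
      rw [hSiH.eq, hCdef, Matrix.mul_sub, Matrix.sub_mul, hSBS]
    rw [h']
    exact hBA.conjTranspose_mul_mul_same S⁻¹
  have hdetC : C.det = A.det / B.det := by
    rw [hCdef, det_mul, det_mul, det_nonsing_inv, Ring.inverse_eq_inv, ← hSdet]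
    field_simp
  have hSCS : S * C * S = A := by
    rw [hCdef, ← Matrix.mul_assoc, ← Matrix.mul_assoc, hSi, Matrix.one_mul,
      Matrix.mul_assoc, hSi', Matrix.mul_one]
  set y : Fin d → ℝ := S *ᵥ x with hy
  have conj : ∀ M : Matrix (Fin d) (Fin d) ℝ,
      y ⬝ᵥ (M *ᵥ y) = x ⬝ᵥ ((S * M * S) *ᵥ x) := by
    intro M
    rw [← Matrix.mulVec_mulVec, ← Matrix.mulVec_mulVec,
      dotProduct_mulVec x S (M *ᵥ (S *ᵥ x)),
      show x ᵥ* S = S *ᵥ x from by rw [← mulVec_transpose, hST], hy]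
  have h1 : y ⬝ᵥ (C *ᵥ y) = x ⬝ᵥ (A *ᵥ x) := by rw [conj C, hSCS]
  have h2 : y ⬝ᵥ y = x ⬝ᵥ (B *ᵥ x) := by
    have := conj 1
    rwa [Matrix.mul_one, hSS, one_mulVec] at this
  have := key_lemma hCH hC1 y
  rwa [h1, h2, hdetC] at this
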